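/- For every smooth o-symmetric convex domain K₀ in ℝ², the maximum cardinality of a separable point set on ∂K₀ is exactly 4. -/

import Mathlib

open scoped Pointwise RealInnerProductSpace

namespace SepAux

abbrev EE := EuclideanSpace ℝ (Fin 2)

lemma inner_coords (x y : EE) : ⟪x, y⟫ = x 0 * y 0 + x 1 * y 1 := by
  simp [PiLp.inner_apply, RCLike.inner_apply, Fin.sum_univ_two]; ring

lemma coord_norm (x : EE) : ‖x‖ = Real.sqrt (x 0 ^ 2 + x 1 ^ 2) := by
  rw [EuclideanSpace.norm_eq]
  simp [Fin.sum_univ_two, Real.norm_eq_abs, sq_abs]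

lemma prop_of_det_zero {a b u v : ℝ} (hab : ¬(a = 0 ∧ b = 0)) (huv : ¬(u = 0 ∧ v = 0))
    (h : a * v - b * u = 0) : ∃ c : ℝ, c ≠ 0 ∧ u = c * a ∧ v = c * b := by
  by_cases ha : a = 0
  · have hb : b ≠ 0 := fun h' => hab ⟨ha, h'⟩
    have hu : u = 0 := by
      have h2 : b * u = 0 := by rw [ha] at h; linarith
      rcases mul_eq_zero.mp h2 with h' | h'
      · exact absurd h' hb
      · exact h'
    have hv : v ≠ 0 := fun h' => huv ⟨hu, h'⟩
    refine ⟨v / b, div_ne_zero hv hb, ?_, ?_⟩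
    · rw [hu, ha]; ring
    · field_simp
  · refine ⟨u / a, ?_, ?_, ?_⟩
    · intro h0
      have hu : u = 0 := by
        rcases div_eq_zero_iff.mp h0 with h' | h'
        · exact h'
        · exact absurd h' ha
      have hv : v = 0 := by
        have : a * v = 0 := by rw [hu] at h; linarith
        rcases mul_eq_zero.mp this with h' | h'
        · exact absurd h' ha
        · exact h'
      exact huv ⟨hu, hv⟩
    · field_simp
    · field_simp; linarith

lemma perp_repr {a b x0 x1 : ℝ} (hab : ¬(a = 0 ∧ b = 0)) (h : x0 * a + x1 * b = 0) :
    ∃ s : ℝ, x0 = -s * b ∧ x1 = s * a := by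
  by_cases ha : a = 0
  · have hb : b ≠ 0 := fun h' => hab ⟨ha, h'⟩
    have hx1 : x1 = 0 := by
      have h2 : x1 * b = 0 := by rw [ha] at h; linarith
      rcases mul_eq_zero.mp h2 with h' | h'
      · exact h'
      · exact absurd h' hb
    refine ⟨-x0 / b, by field_simp, by rw [hx1, ha]; ring⟩
  · refine ⟨x1 / a, ?_, by field_simp⟩
    field_simp
    linarith

lemma two_out {α} {r : α → α → Prop} {a x y : α} (h1 : r a x) (h2 : r a y)
    (h3 : r x y ∨ r y x) : ∃ u v w, r u v ∧ r v w ∧ r u w :=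
  h3.elim (fun h => ⟨a, x, y, h1, h, h2⟩) (fun h => ⟨a, y, x, h2, h, h1⟩)

lemma two_in {α} {r : α → α → Prop} {a x y : α} (h1 : r x a) (h2 : r y a)
    (h3 : r x y ∨ r y x) : ∃ u v w, r u v ∧ r v w ∧ r u w :=
  h3.elim (fun h => ⟨x, y, a, h, h2, h1⟩) (fun h => ⟨y, x, a, h, h1, h2⟩)

lemma tourn {α} (r : α → α → Prop) (a b c d : α)
    (hab : r a b ∨ r b a) (hac : r a c ∨ r c a) (had : r a d ∨ r d a)
    (hbc : r b c ∨ r c b) (hbd : r b d ∨ r d b) (hcd : r c d ∨ r d c) :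
    ∃ u v w, r u v ∧ r v w ∧ r u w := by
  rcases hab with h1 | h1 <;> rcases hac with h2 | h2 <;> rcases had with h3 | h3
  · exact two_out h1 h2 hbc
  · exact two_out h1 h2 hbc
  · exact two_out h1 h3 hbd
  · exact two_in h2 h3 hcd
  · exact two_out h2 h3 hcd
  · exact two_in h1 h3 hbd
  · exact two_in h1 h2 hbc
  · exact two_in h1 h2 hbc

lemma pair_neg {su sw tu tw : ℝ} (h1 : 0 < su * tu) (h2 : 0 < sw * tw) (h3 : sw * tu ≤ 0) :
    su * sw < 0 := by
  have hsw : sw ≠ 0 := by rintro rfl; simp at h2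
  have htu : tu ≠ 0 := by rintro rfl; simp at h1
  have h4 : sw * tu < 0 := lt_of_le_of_ne h3 (mul_ne_zero hsw htu)
  nlinarith [mul_pos h1 (neg_pos.mpr h4), sq_nonneg tu]

lemma no_five (p n : Fin 5 → EE)
    (hpos : ∀ i, 0 < ⟪n i, p i⟫)
    (hneg : ∀ i j, i ≠ j → ⟪n i, p j⟫ ≤ 0) : False := by
  classical
  set D : Fin 5 → Fin 5 → ℝ := fun i j => p i 0 * p j 1 - p i 1 * p j 0 with hD
  have hcoordne : ∀ i, ¬(p i 0 = 0 ∧ p i 1 = 0) := by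
    rintro i ⟨h0, h1⟩
    have := hpos i
    rw [inner_coords, h0, h1] at this
    linarith
  by_cases hcase : ∃ i j, i ≠ j ∧ D i j = 0
  · obtain ⟨i, j, hij, hDij⟩ := hcase
    obtain ⟨c, hc0, hcu, hcv⟩ := prop_of_det_zero (hcoordne i) (hcoordne j) hDij
    have key : ∀ l, ⟪n l, p j⟫ = c * ⟪n l, p i⟫ := by
      intro l
      rw [inner_coords, inner_coords, hcu, hcv]; ring
    rcases lt_or_gt_of_ne hc0 with hcneg | hcpos
    · -- c < 0 case: three spare indices give a sign contradiction
      have hperp : ∀ l, l ≠ i → l ≠ j → n l 0 * p i 0 + n l 1 * p i 1 = 0 := by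
        intro l hli hlj
        have h1 := hneg l i hli
        have h2 := hneg l j hlj
        rw [key l] at h2
        rw [inner_coords] at h1
        rcases lt_trichotomy (n l 0 * p i 0 + n l 1 * p i 1) 0 with h | h | h
        · exfalso
          have := mul_pos_of_neg_of_neg hcneg h
          rw [inner_coords] at h2
          nlinarith
        · exact h
        · linarith
      have hcard : ({i, j}ᶜ : Finset (Fin 5)).card = 3 := by
        rw [Finset.card_compl, Finset.card_pair hij]; rfl
      obtain ⟨l, m, o, hlm, hlo, hmo, hset⟩ := Finset.card_eq_three.mp hcard
      have hmem : ∀ x : Fin 5, x ∈ ({l, m, o} : Finset (Fin 5)) → x ≠ i ∧ x ≠ j := by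
        intro x hx
        rw [← hset, Finset.mem_compl] at hx
        simp only [Finset.mem_insert, Finset.mem_singleton] at hx
        push_neg at hx
        exact hx
      have hl' := hmem l (by simp)
      have hm' := hmem m (by simp)
      have ho' := hmem o (by simp)
      obtain ⟨sl, hsl0, hsl1⟩ := perp_repr (hcoordne i) (hperp l hl'.1 hl'.2)
      obtain ⟨sm, hsm0, hsm1⟩ := perp_repr (hcoordne i) (hperp m hm'.1 hm'.2)
      obtain ⟨so, hso0, hso1⟩ := perp_repr (hcoordne i) (hperp o ho'.1 ho'.2)
      set t : Fin 5 → ℝ := fun w => p i 0 * p w 1 - p i 1 * p w 0 with ht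
      have hinner : ∀ (u w : Fin 5) (s : ℝ), n u 0 = -s * p i 1 → n u 1 = s * p i 0 →
          ⟪n u, p w⟫ = s * t w := by
        intro u w s h0 h1
        rw [inner_coords, h0, h1, ht]; ring
      have hposl : 0 < sl * t l := by rw [← hinner l l sl hsl0 hsl1]; exact hpos l
      have hposm : 0 < sm * t m := by rw [← hinner m m sm hsm0 hsm1]; exact hpos m
      have hposo : 0 < so * t o := by rw [← hinner o o so hso0 hso1]; exact hpos o
      have hlm2 : sm * t l ≤ 0 := by rw [← hinner m l sm hsm0 hsm1]; exact hneg m l (Ne.symm hlm)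
      have hlo2 : so * t l ≤ 0 := by rw [← hinner o l so hso0 hso1]; exact hneg o l (Ne.symm hlo)
      have hmo2 : so * t m ≤ 0 := by rw [← hinner o m so hso0 hso1]; exact hneg o m (Ne.symm hmo)
      have p1 : sl * sm < 0 := pair_neg hposl hposm hlm2
      have p2 : sl * so < 0 := pair_neg hposl hposo hlo2
      have p3 : sm * so < 0 := pair_neg hposm hposo hmo2
      nlinarith [mul_pos (neg_pos.mpr p1) (neg_pos.mpr p2), sq_nonneg sl,
        mul_nonpos_of_nonneg_of_nonpos (sq_nonneg sl) p3.le]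
    · -- c > 0 gives an immediate contradiction
      have := hpos j
      rw [key j] at this
      have h2 := hneg j i hij.symm
      nlinarith
  · push_neg at hcase
    have hdxx : ∀ w, D w w = 0 := fun w => by simp only [hD]; ring
    have htot : ∀ i j : Fin 5, i ≠ j → (0 < D i j ∨ 0 < D j i) := by
      intro i j hij
      have hne := hcase i j hij
      have hrev : D j i = -D i j := by simp only [hD]; ring
      rcases lt_or_gt_of_ne hne with h' | h'
      · right; rw [hrev]; linarith
      · left; exact h'
    obtain ⟨x, y, z, hxy, hyz, hxz⟩ :=
      tourn (fun i j => 0 < D i j) 0 1 2 3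
        (htot 0 1 (by decide)) (htot 0 2 (by decide)) (htot 0 3 (by decide))
        (htot 1 2 (by decide)) (htot 1 3 (by decide)) (htot 2 3 (by decide))
    have hyx : y ≠ x := by
      intro h; subst h; rw [hdxx] at hxy; exact lt_irrefl 0 hxy
    have hyz' : y ≠ z := by
      intro h; subst h; rw [hdxx] at hyz; exact lt_irrefl 0 hyz
    have key : D x z * ⟪n y, p y⟫ = D y z * ⟪n y, p x⟫ + D x y * ⟪n y, p z⟫ := by
      simp only [hD, inner_coords]; ring
    have h1 : ⟪n y, p x⟫ ≤ 0 := hneg y x hyx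
    have h2 : ⟪n y, p z⟫ ≤ 0 := hneg y z hyz'
    nlinarith [mul_pos hxz (hpos y), mul_le_mul_of_nonneg_left h1 hyz.le,
      mul_le_mul_of_nonneg_left h2 hxy.le]

lemma neg_frontier {K : Set EE} (hsymm : K = -K) {p : EE} (hp : p ∈ frontier K) :
    -p ∈ frontier K := by
  have h1 : frontier (-K) = -frontier K := by
    have := (Homeomorph.neg EE).preimage_frontier K
    simpa [Set.neg_preimage] using this.symm
  have h2 : frontier K = -frontier K := by rw [← h1, ← hsymm]
  rw [h2]
  simpa using hp

lemma zero_mem_interior {K : Set EE} (hconv : Convex ℝ K) (hint : (interior K).Nonempty)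
    (hsymm : K = -K) : (0 : EE) ∈ interior K := by
  obtain ⟨z, hz⟩ := hint
  have h1 : interior (-K) = -interior K := by
    have := (Homeomorph.neg EE).preimage_interior K
    simpa [Set.neg_preimage] using this.symm
  have h2 : interior K = -interior K := by rw [← h1, ← hsymm]
  have hz' : -z ∈ interior K := by rw [h2]; simpa using hz
  have h3 := hconv.interior hz hz' (by norm_num : (0:ℝ) ≤ 1/2) (by norm_num : (0:ℝ) ≤ 1/2)
    (by norm_num)
  have e : (1/2 : ℝ) • z + (1/2 : ℝ) • (-z) = 0 := by
    rw [smul_neg]; exact add_neg_cancel _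
  rwa [e] at h3


lemma sep_cases (F : EE → (EE →L[ℝ] ℝ)) (a b : EE)
    (hFneg1 : F (-a) = -F a) (hFneg2 : F (-b) = -F b)
    (hFab : F a b = 0) (hFba : F b a = 0)
    (hFaa : 0 < F a a) (hFbb : 0 < F b b)
    (x y : EE) (hx : x = a ∨ x = -a ∨ x = b ∨ x = -b)
    (hy : y = a ∨ y = -a ∨ y = b ∨ y = -b) (hxy : x ≠ y)
    (hposxy : 0 < F y x) : False := by
  rcases hx with rfl | rfl | rfl | rfl <;> rcases hy with rfl | rfl | rfl | rfl <;>
    first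
      | exact hxy rfl
      | (try simp only [hFneg1, hFneg2, ContinuousLinearMap.neg_apply,
          map_neg, neg_neg] at hposxy
         linarith [hFaa, hFbb, hFab, hFba, hposxy])

end SepAux

open SepAux in
set_option maxHeartbeats 1000000 in
/-- For every smooth o-symmetric convex domain `K` in `ℝ²` (smoothness encoded by the map
`F` assigning to each boundary point its unique unit-norm supporting functional), the
maximum cardinality of a separable point set on `∂K` is exactly `4`. A set `S ⊆ ∂K` is
separable if for all distinct `x, y ∈ S`, `x` is not in the cap
`C(y) = {z ∈ ∂K | 0 < F y z ∧ F y z ≤ F y y}`. -/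
theorem max_separable_point_set_card_eq_four
    (K : Set (EuclideanSpace ℝ (Fin 2)))
    (hconv : Convex ℝ K) (hcomp : IsCompact K) (hint : (interior K).Nonempty)
    (hsymm : K = -K)
    (F : EuclideanSpace ℝ (Fin 2) → (EuclideanSpace ℝ (Fin 2) →L[ℝ] ℝ))
    (hFnorm : ∀ p ∈ frontier K, ‖F p‖ = 1)
    (hFsupp : ∀ p ∈ frontier K, ∀ x ∈ K, F p x ≤ F p p)
    (hsmooth : ∀ p ∈ frontier K, ∀ g : EuclideanSpace ℝ (Fin 2) →L[ℝ] ℝ,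
      ‖g‖ = 1 → (∀ x ∈ K, g x ≤ g p) → g = F p) :
    (∃ S : Set (EuclideanSpace ℝ (Fin 2)), S ⊆ frontier K ∧
      (∀ x ∈ S, ∀ y ∈ S, x ≠ y →
        ¬ (x ∈ frontier K ∧ 0 < F y x ∧ F y x ≤ F y y)) ∧ S.ncard = 4) ∧
    (∀ S : Set (EuclideanSpace ℝ (Fin 2)), S ⊆ frontier K →
      (∀ x ∈ S, ∀ y ∈ S, x ≠ y →
        ¬ (x ∈ frontier K ∧ 0 < F y x ∧ F y x ≤ F y y)) →
      S.Finite ∧ S.ncard ≤ 4) := by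
  classical
  have hKclosed : IsClosed K := hcomp.isClosed
  have hfrK : frontier K ⊆ K := frontier_subset_iff_isClosed.mpr hKclosed
  have hnegK : ∀ x ∈ K, -x ∈ K := by
    intro x hx
    rw [hsymm] at hx
    exact Set.mem_neg.mp hx
  have h0int : (0 : EE) ∈ interior K := zero_mem_interior hconv hint hsymm
  obtain ⟨ε, hε, hball⟩ := Metric.isOpen_iff.mp isOpen_interior 0 h0int
  have hballK : Metric.ball (0 : EE) ε ⊆ K := hball.trans interior_subset
  -- `F p p > 0` on the frontier
  have hFpp : ∀ p ∈ frontier K, 0 < F p p := by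
    intro p hp
    have h1 : (1/2 : ℝ) < ‖F p‖ := by rw [hFnorm p hp]; norm_num
    have hgen : ∃ y : EE, ‖y‖ < 1 ∧ 1/2 < F p y := by
      obtain ⟨x, hx1, hx2⟩ := (F p).exists_lt_apply_of_lt_opNorm h1
      rcases le_or_gt (F p x) 0 with h | h
      · refine ⟨-x, by simpa using hx1, ?_⟩
        rw [map_neg]
        rw [Real.norm_eq_abs, abs_of_nonpos h] at hx2
        linarith
      · exact ⟨x, hx1, by rwa [Real.norm_eq_abs, abs_of_pos h] at hx2⟩
    obtain ⟨y, hy1, hy2⟩ := hgen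
    have hmem : (ε/2) • y ∈ K := by
      apply hballK
      rw [Metric.mem_ball, dist_zero_right, norm_smul, Real.norm_eq_abs,
        abs_of_pos (by linarith : (0:ℝ) < ε/2)]
      nlinarith [norm_nonneg y]
    have h3 := hFsupp p hp _ hmem
    rw [map_smul, smul_eq_mul] at h3
    nlinarith
  -- `F (-p) = - F p`
  have hFneg : ∀ p ∈ frontier K, F (-p) = -(F p) := by
    intro p hp
    refine (hsmooth (-p) (neg_frontier hsymm hp) (-(F p)) ?_ ?_).symm
    · rw [norm_neg]; exact hFnorm p hp
    · intro x hx
      have h3 := hFsupp p hp (-x) (hnegK x hx)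
      simpa using h3
  -- the "determinant" function and its maximum over `K ×ˢ K`
  set φ : EE → EE → ℝ := fun x y => x 0 * y 1 - x 1 * y 0 with hφ
  have hcont : Continuous fun q : EE × EE => φ q.1 q.2 := by
    apply Continuous.sub
    · exact ((continuous_apply 0).comp ((PiLp.continuous_ofLp 2 _).comp continuous_fst)).mul
        ((continuous_apply 1).comp ((PiLp.continuous_ofLp 2 _).comp continuous_snd))
    · exact ((continuous_apply 1).comp ((PiLp.continuous_ofLp 2 _).comp continuous_fst)).mul
        ((continuous_apply 0).comp ((PiLp.continuous_ofLp 2 _).comp continuous_snd))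
  have hKne : K.Nonempty := ⟨0, interior_subset h0int⟩
  obtain ⟨m, hmK, hmax⟩ := (hcomp.prod hcomp).exists_isMaxOn (hKne.prod hKne)
    hcont.continuousOn
  obtain ⟨a, b⟩ := m
  have haK : a ∈ K := hmK.1
  have hbK : b ∈ K := hmK.2
  have hmax' : ∀ x ∈ K, ∀ y ∈ K, φ x y ≤ φ a b := by
    intro x hx y hy
    exact hmax (show (x, y) ∈ K ×ˢ K from ⟨hx, hy⟩)
  -- the maximum is positive
  have hd : 0 < φ a b := by
    have hs1 : (EuclideanSpace.single 0 (ε/2) : EE) ∈ K := by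
      apply hballK
      rw [Metric.mem_ball, dist_zero_right, EuclideanSpace.norm_single,
        Real.norm_eq_abs, abs_of_pos (by linarith : (0:ℝ) < ε/2)]
      linarith
    have hs2 : (EuclideanSpace.single 1 (ε/2) : EE) ∈ K := by
      apply hballK
      rw [Metric.mem_ball, dist_zero_right, EuclideanSpace.norm_single,
        Real.norm_eq_abs, abs_of_pos (by linarith : (0:ℝ) < ε/2)]
      linarith
    have h4 := hmax' _ hs1 _ hs2
    have h5 : φ (EuclideanSpace.single 0 (ε/2) : EE) (EuclideanSpace.single 1 (ε/2) : EE)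
        = (ε/2) * (ε/2) := by
      simp [hφ, EuclideanSpace.single_apply]
    rw [h5] at h4
    have h6 : 0 < ε/2 * (ε/2) := by positivity
    exact lt_of_lt_of_le h6 h4
  have hb0 : ¬(b 0 = 0 ∧ b 1 = 0) := by
    rintro ⟨h0, h1⟩
    simp only [hφ, h0, h1, mul_zero, sub_zero] at hd
    exact lt_irrefl 0 hd
  have ha0 : ¬(a 0 = 0 ∧ a 1 = 0) := by
    rintro ⟨h0, h1⟩
    simp only [hφ, h0, h1, zero_mul, sub_zero] at hd
    exact lt_irrefl 0 hd
  have hbb2 : 0 < b 0 ^ 2 + b 1 ^ 2 := by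
    rcases not_and_or.mp hb0 with h | h
    · nlinarith [mul_self_pos.mpr h, sq_nonneg (b 1)]
    · nlinarith [mul_self_pos.mpr h, sq_nonneg (b 0)]
  have haa2 : 0 < a 0 ^ 2 + a 1 ^ 2 := by
    rcases not_and_or.mp ha0 with h | h
    · nlinarith [mul_self_pos.mpr h, sq_nonneg (a 1)]
    · nlinarith [mul_self_pos.mpr h, sq_nonneg (a 0)]
  -- witness vectors for the supporting functionals at `a` and `b`
  set wb : EE := EuclideanSpace.single 0 (b 1) + EuclideanSpace.single 1 (-(b 0)) with hwb
  set wa : EE := EuclideanSpace.single 0 (-(a 1)) + EuclideanSpace.single 1 (a 0) with hwa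
  have hwb_coords : wb 0 = b 1 ∧ wb 1 = -(b 0) := by
    constructor <;>
      simp [hwb, EuclideanSpace.single_apply]
  have hwa_coords : wa 0 = -(a 1) ∧ wa 1 = a 0 := by
    constructor <;>
      simp [hwa, EuclideanSpace.single_apply]
  have hinner_wb : ∀ x : EE, ⟪wb, x⟫ = φ x b := by
    intro x
    rw [inner_coords, hwb_coords.1, hwb_coords.2]
    simp only [hφ]
    ring
  have hinner_wa : ∀ x : EE, ⟪wa, x⟫ = φ a x := by
    intro x
    rw [inner_coords, hwa_coords.1, hwa_coords.2]
    simp only [hφ]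
    ring
  have hwb_norm : ‖wb‖ = ‖b‖ := by
    rw [coord_norm, coord_norm, hwb_coords.1, hwb_coords.2]
    congr 1
    ring
  have hwa_norm : ‖wa‖ = ‖a‖ := by
    rw [coord_norm, coord_norm, hwa_coords.1, hwa_coords.2]
    congr 1
    ring
  have hbnorm : 0 < ‖b‖ := by
    rw [coord_norm]
    exact Real.sqrt_pos.mpr hbb2
  have hanorm : 0 < ‖a‖ := by
    rw [coord_norm]
    exact Real.sqrt_pos.mpr haa2
  -- `a` and `b` are frontier points
  have hfra : a ∈ frontier K := by
    rw [hKclosed.frontier_eq]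
    refine ⟨haK, fun hintA => ?_⟩
    obtain ⟨δ, hδ, hb2⟩ := Metric.isOpen_iff.mp isOpen_interior a hintA
    set t : ℝ := δ / (2 * (‖wb‖ + 1)) with htdef
    have hwpos : (0:ℝ) < ‖wb‖ + 1 := by positivity
    have htpos : 0 < t := by rw [htdef]; positivity
    have htw : t * (‖wb‖ + 1) = δ / 2 := by rw [htdef]; field_simp
    have hmem : a + t • wb ∈ interior K := hb2 (by
      rw [Metric.mem_ball, dist_eq_norm, add_sub_cancel_left, norm_smul, Real.norm_eq_abs,
        abs_of_pos htpos]
      nlinarith [norm_nonneg wb])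
    have hcoord : φ (a + t • wb) b = φ a b + t * (b 0 ^ 2 + b 1 ^ 2) := by
      simp only [hφ, PiLp.add_apply, PiLp.smul_apply, smul_eq_mul,
        hwb_coords.1, hwb_coords.2]
      ring
    have h6 := hmax' _ (interior_subset hmem) _ hbK
    rw [hcoord] at h6
    nlinarith
  have hfrb : b ∈ frontier K := by
    rw [hKclosed.frontier_eq]
    refine ⟨hbK, fun hintB => ?_⟩
    obtain ⟨δ, hδ, hb2⟩ := Metric.isOpen_iff.mp isOpen_interior b hintB
    set t : ℝ := δ / (2 * (‖wa‖ + 1)) with htdef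
    have hwpos : (0:ℝ) < ‖wa‖ + 1 := by positivity
    have htpos : 0 < t := by rw [htdef]; positivity
    have htw : t * (‖wa‖ + 1) = δ / 2 := by rw [htdef]; field_simp
    have hmem : b + t • wa ∈ interior K := hb2 (by
      rw [Metric.mem_ball, dist_eq_norm, add_sub_cancel_left, norm_smul, Real.norm_eq_abs,
        abs_of_pos htpos]
      nlinarith [norm_nonneg wa])
    have hcoord : φ a (b + t • wa) = φ a b + t * (a 0 ^ 2 + a 1 ^ 2) := by
      simp only [hφ, PiLp.add_apply, PiLp.smul_apply, smul_eq_mul,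
        hwa_coords.1, hwa_coords.2]
      ring
    have h6 := hmax' _ haK _ (interior_subset hmem)
    rw [hcoord] at h6
    nlinarith
  -- identify the supporting functionals at `a` and `b`
  have hFa : F a = ‖b‖⁻¹ • innerSL ℝ wb := by
    refine (hsmooth a hfra (‖b‖⁻¹ • innerSL ℝ wb) ?_ ?_).symm
    · rw [norm_smul (‖b‖⁻¹) (innerSL ℝ wb), innerSL_apply_norm (𝕜 := ℝ), hwb_norm,
        Real.norm_eq_abs, abs_of_pos (inv_pos.mpr hbnorm)]
      exact inv_mul_cancel₀ (ne_of_gt hbnorm)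
    · intro x hx
      simp only [ContinuousLinearMap.smul_apply, smul_eq_mul, innerSL_apply_apply]
      rw [hinner_wb x, hinner_wb a]
      exact mul_le_mul_of_nonneg_left (hmax' x hx b hbK) (inv_nonneg.mpr hbnorm.le)
  have hFb : F b = ‖a‖⁻¹ • innerSL ℝ wa := by
    refine (hsmooth b hfrb (‖a‖⁻¹ • innerSL ℝ wa) ?_ ?_).symm
    · rw [norm_smul (‖a‖⁻¹) (innerSL ℝ wa), innerSL_apply_norm (𝕜 := ℝ), hwa_norm,
        Real.norm_eq_abs, abs_of_pos (inv_pos.mpr hanorm)]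
      exact inv_mul_cancel₀ (ne_of_gt hanorm)
    · intro x hx
      simp only [ContinuousLinearMap.smul_apply, smul_eq_mul, innerSL_apply_apply]
      rw [hinner_wa x, hinner_wa b]
      exact mul_le_mul_of_nonneg_left (hmax' a haK x hx) (inv_nonneg.mpr hanorm.le)
  have hphibb : φ b b = 0 := by simp only [hφ]; ring
  have hphiaa : φ a a = 0 := by simp only [hφ]; ring
  have hFab : F a b = 0 := by
    rw [hFa]
    simp only [ContinuousLinearMap.smul_apply, smul_eq_mul, innerSL_apply_apply]
    rw [hinner_wb b, hphibb, mul_zero]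
  have hFba : F b a = 0 := by
    rw [hFb]
    simp only [ContinuousLinearMap.smul_apply, smul_eq_mul, innerSL_apply_apply]
    rw [hinner_wa a, hphiaa, mul_zero]
  -- distinctness of the four points
  have coordeq : ∀ u v : EE, u = v → u 0 = v 0 ∧ u 1 = v 1 := by
    rintro u v rfl; exact ⟨rfl, rfl⟩
  have hab' : a ≠ b := by
    intro h
    rw [h, hphibb] at hd
    exact lt_irrefl 0 hd
  have hanb : a ≠ -b := by
    intro h
    have h0 := (coordeq _ _ h).1
    have h1 := (coordeq _ _ h).2
    simp only [PiLp.neg_apply] at h0 h1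
    simp only [hφ, h0, h1] at hd
    nlinarith [hd]
  have hana : a ≠ -a := by
    intro h
    have h0 := (coordeq _ _ h).1
    have h1 := (coordeq _ _ h).2
    simp only [PiLp.neg_apply] at h0 h1
    exact ha0 ⟨by linarith, by linarith⟩
  have hbnb : b ≠ -b := by
    intro h
    have h0 := (coordeq _ _ h).1
    have h1 := (coordeq _ _ h).2
    simp only [PiLp.neg_apply] at h0 h1
    exact hb0 ⟨by linarith, by linarith⟩
  have hna_b : -a ≠ b := fun h => hanb (by rw [← h, neg_neg])
  have hnanb : -a ≠ -b := fun h => hab' (neg_injective h)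
  have hScard : ({a, -a, b, -b} : Set EE).ncard = 4 := by
    rw [show ({a, -a, b, -b} : Set EE) = (↑({a, -a, b, -b} : Finset EE)) by simp]
    rw [Set.ncard_coe_finset]
    rw [Finset.card_insert_of_notMem (by simp [hana, hab', hanb]),
      Finset.card_insert_of_notMem (by simp [hna_b, hnanb]),
      Finset.card_pair hbnb]
  have hFaa := hFpp a hfra
  have hFbb := hFpp b hfrb
  constructor
  · refine ⟨{a, -a, b, -b}, ?_, ?_, hScard⟩
    · intro x hx
      simp only [Set.mem_insert_iff, Set.mem_singleton_iff] at hx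
      rcases hx with rfl | rfl | rfl | rfl
      · exact hfra
      · exact neg_frontier hsymm hfra
      · exact hfrb
      · exact neg_frontier hsymm hfrb
    · intro x hx y hy hxy
      rintro ⟨-, hposxy, -⟩
      simp only [Set.mem_insert_iff, Set.mem_singleton_iff] at hx hy
      exact sep_cases F a b (hFneg a hfra) (hFneg b hfrb) hFab hFba hFaa hFbb
        x y hx hy hxy hposxy
  · intro S hSsub hSsep
    have key : ∀ T ⊆ S, T.Finite → T.ncard = 5 → False := by
      intro T hTS hTfin hT5
      have : Fintype T := hTfin.fintype
      have hc : Fintype.card T = 5 := by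
        rw [← Nat.card_eq_fintype_card, Nat.card_coe_set_eq]
        exact hT5
      let e := Fintype.equivFinOfCardEq hc
      set f : Fin 5 → EE := fun i => ((e.symm i : T) : EE) with hf
      have hfT : ∀ i, f i ∈ T := fun i => (e.symm i).2
      have hfS : ∀ i, f i ∈ S := fun i => hTS (hfT i)
      have hffr : ∀ i, f i ∈ frontier K := fun i => hSsub (hfS i)
      have hfinj : Function.Injective f := by
        intro i j h
        have h2 : e.symm i = e.symm j := Subtype.coe_injective h
        simpa using e.symm.injective h2
      refine no_five f (fun i => (InnerProductSpace.toDual ℝ EE).symm (F (f i))) ?_ ?_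
      · intro i
        rw [InnerProductSpace.toDual_symm_apply]
        exact hFpp _ (hffr i)
      · intro i j hij
        rw [InnerProductSpace.toDual_symm_apply]
        by_contra hlt
        push_neg at hlt
        exact hSsep (f j) (hfS j) (f i) (hfS i) (fun h => hij ((hfinj h).symm))
          ⟨hffr j, hlt, hFsupp (f i) (hffr i) (f j) (hfrK (hffr j))⟩
    have hSfin : S.Finite := by
      by_contra hinf
      obtain ⟨T, hTS, hTfin, hT5⟩ := Set.Infinite.exists_subset_ncard_eq hinf 5
      exact key T hTS hTfin hT5
    refine ⟨hSfin, ?_⟩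
    by_contra hgt
    push_neg at hgt
    obtain ⟨T, hTS, hT5⟩ := Set.exists_subset_card_eq (s := S) (n := 5) (by omega)
    exact key T hTS (hSfin.subset hTS) hT5
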